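/- Let Q₁ be the quadratic Cremona map of ℂ³ given by Q₁(x,y,z) = (y²−xz, x²−yz, z²−xy). Then there exists a nonzero constant c ∈ ℂ such that for every t ∈ ℂ one has the equality of polynomial 1-forms Q₁^*(Ω + t·Ξ) = c·((x+y+z)(x+τy+τ²z)(x+τ²y+τz))²·(Ω + (−t−1)·Ξ), i.e. the three coefficient polynomials (of dx, dy, dz) on the two sides agree. (Hence the strict transform of the Lins Neto foliation ℱ_t under Q₁ is ℱ_{−t−1}.) -/

import Mathlib

open MvPolynomial

noncomputable section

/-- τ = e^{2πi/3}, a primitive cube root of unity. -/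
def τ : ℂ := Complex.exp (2 * Real.pi * Complex.I / 3)

/-- The polynomial ring ℂ[x,y,z]. -/
abbrev R3 : Type := MvPolynomial (Fin 3) ℂ

def Xv : R3 := X 0
def Yv : R3 := X 1
def Zv : R3 := X 2

/-- The 1-form Ω (coefficients of dx, dy, dz). -/
def Om : Fin 3 → R3 :=
  ![Zv * (Yv - Zv) * (Zv ^ 2 + Yv ^ 2 + Yv * Zv) * Yv,
    -(Zv * (Xv - Zv) * (Xv ^ 2 + Zv * Xv + Zv ^ 2) * Xv),
    Xv * Yv * (Xv - Yv) * (Xv ^ 2 + Xv * Yv + Yv ^ 2)]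

/-- The 1-form Ξ (coefficients of dx, dy, dz). -/
def Xi : Fin 3 → R3 :=
  ![-((Yv - Zv) * (Zv ^ 2 + Yv ^ 2 + Yv * Zv) * Xv ^ 2),
    (Xv - Zv) * (Xv ^ 2 + Zv * Xv + Zv ^ 2) * Yv ^ 2,
    -(Zv ^ 2 * (Xv - Yv) * (Xv ^ 2 + Xv * Yv + Yv ^ 2))]

/-- Pullback of the 1-form ω by the polynomial map Q:
`Q^*ω := (A∘Q) dQ₁ + (B∘Q) dQ₂ + (C∘Q) dQ₃`. -/
def pullback (Q ω : Fin 3 → R3) : Fin 3 → R3 :=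
  fun i => ∑ j, aeval Q (ω j) * pderiv i (Q j)

def Qmap : Fin 3 → R3 := ![Yv ^ 2 - Xv * Zv, Xv ^ 2 - Yv * Zv, Zv ^ 2 - Xv * Yv]

lemma hτ : τ ^ 2 + τ + 1 = 0 := by
  have hp : IsPrimitiveRoot τ 3 := by
    have := Complex.isPrimitiveRoot_exp 3 (by norm_num)
    unfold τ
    convert this using 2
    norm_num
  have h3 : τ ^ 3 = 1 := hp.pow_eq_one
  have hne : τ ≠ 1 := hp.ne_one (by norm_num)
  have h : (τ - 1) * (τ ^ 2 + τ + 1) = 0 := by linear_combination h3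
  rcases mul_eq_zero.mp h with h | h
  · exact absurd (sub_eq_zero.mp h) hne
  · exact h

lemma hCτ : (C τ : R3) ^ 2 + C τ + 1 = 0 := by
  have : (C : ℂ →+* R3) (τ ^ 2 + τ + 1) = (C : ℂ →+* R3) 0 := by rw [hτ]
  simpa using this

lemma cube : (Xv + Yv + Zv) * (Xv + C τ * Yv + C τ ^ 2 * Zv) * (Xv + C τ ^ 2 * Yv + C τ * Zv)
    = Xv ^ 3 + Yv ^ 3 + Zv ^ 3 - 3 * (Xv * Yv * Zv) := by
  linear_combination ((Xv + Yv + Zv) *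
    ((C τ - 1) * (Yv ^ 2 + Zv ^ 2) + Xv * Yv + Xv * Zv + (C τ ^ 2 - C τ + 1) * Yv * Zv)) * hCτ

theorem stmt_0 : ∃ c : ℂ, c ≠ 0 ∧ ∀ t : ℂ,
    pullback Qmap (fun i => Om i + C t * Xi i) =
      fun i => C c * ((Xv + Yv + Zv) * (Xv + C τ * Yv + C τ ^ 2 * Zv) * (Xv + C τ ^ 2 * Yv + C τ * Zv)) ^ 2 * (Om i + C (-t - 1) * Xi i) := by
  refine ⟨1, one_ne_zero, fun t => ?_⟩
  funext i
  simp only [cube]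
  fin_cases i <;>
  · simp [pullback, Qmap, Om, Xi, Xv, Yv, Zv, Fin.sum_univ_three, map_add, map_mul, map_sub,
      map_neg, map_pow, map_one, aeval_X, algebraMap_eq, pderiv_X]
    ring
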